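/- Let D be a division ring and (R, C) a solution of the non-commutative (1,4)-system with commutator C, and set u_n := R_{2n} (so that u_{n+1} C u_n − 1 = R_{2n+1} is a unit). Then the quantity K_n := ((C u_n)² + (u_{n+1})²) · (u_{n+1} C u_n − 1)⁻¹ is independent of n: K_n = K_m for all n, m ∈ ℤ. -/

import Mathlib

lemma key_onefour {D : Type*} [Ring D] (a b c u p q a' p' q' : D)
    (ha : a * a' = 1) (ha' : a' * a = 1)
    (hp : p * p' = 1) (hp' : p' * p = 1)
    (hq : q * q' = 1) (hq' : q' * q = 1)
    (h1 : p * c * a = a * p) (h2 : b * c * p = p * b)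
    (h3 : p * c * q = 1 + a ^ 4) (h4 : a * c * q = q * a)
    (h5 : q * c * u = u * q) (h6 : a * c * u = 1 + q) (h7 : b * c * a = 1 + p) :
    ((c * u) ^ 2 + a ^ 2) * q' = ((c * a) ^ 2 + b ^ 2) * p' := by
  -- basic consequences
  have hcq : c * q = p' * (1 + a ^ 4) := by
    have := congrArg (p' * ·) h3
    simpa [← mul_assoc, hp', one_mul] using this
  have hcq' : c * q = a' * q * a := by
    have := congrArg (a' * ·) h4
    simpa [← mul_assoc, ha', one_mul] using this
  have L2 : c * q * a' = a' * q := by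
    rw [hcq', mul_assoc, ha, mul_one]
  have hca : c * a = p' * a * p := by
    have := congrArg (p' * ·) h1
    simpa [← mul_assoc, hp', one_mul] using this
  have hcu : c * u = q' * u * q := by
    have := congrArg (q' * ·) h5
    simpa [← mul_assoc, hq', one_mul] using this
  have hcu' : c * u = a' * (1 + q) := by
    have := congrArg (a' * ·) h6
    simpa [← mul_assoc, ha', one_mul] using this
  have hbp' : b * p' = p' * (b * c) := by
    have := congrArg (fun x => p' * x * p') h2
    rw [show p' * (b * c * p) * p' = p' * (b * c) * (p * p') by noncomm_ring,
        show p' * (p * b) * p' = (p' * p) * (b * p') by noncomm_ring,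
        hp, hp', mul_one, one_mul] at this
    rw [this]
  -- squared conjugations
  have hca2 : (c * a) ^ 2 = p' * a ^ 2 * p := by
    rw [hca]
    calc (p' * a * p) ^ 2 = p' * a * (p * p') * a * p := by noncomm_ring
    _ = p' * a ^ 2 * p := by rw [hp]; noncomm_ring
  have hcu2 : (c * u) ^ 2 = q' * u ^ 2 * q := by
    rw [hcu]
    calc (q' * u * q) ^ 2 = q' * u * (q * q') * u * q := by noncomm_ring
    _ = q' * u ^ 2 * q := by rw [hq]; noncomm_ring
  -- L5 : p * (c*u)^2 = (b*c*a' + a^2) * (1 + q)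
  have e1 : a' * (1 + q) = (1 + c * q) * a' := by
    rw [add_mul, one_mul, L2, mul_add, mul_one]
  have e2 : p * (1 + c * q) = b * c * a + a ^ 4 := by
    rw [mul_add, mul_one, ← mul_assoc, h3, h7]; noncomm_ring
  have L5 : p * (c * u) ^ 2 = (b * c * a' + a ^ 2) * (1 + q) := by
    calc p * (c * u) ^ 2 = p * ((c * u) * (c * u)) := by rw [sq]
    _ = p * ((1 + c * q) * a' * ((1 + c * q) * a')) := by rw [hcu', e1]
    _ = (p * (1 + c * q)) * (a' * (1 + c * q) * a') := by noncomm_ring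
    _ = (b * c * a + a ^ 4) * (a' * (1 + c * q) * a') := by rw [e2]
    _ = (b * c * a + a ^ 4) * (a' * a' * (1 + q)) := by
          rw [show a' * (1 + c * q) * a' = a' * ((1 + c * q) * a') by noncomm_ring, ← e1]
          noncomm_ring
    _ = (b * c * a + a ^ 4) * (a' * a') * (1 + q) := by noncomm_ring
    _ = (b * c * a' + a ^ 2) * (1 + q) := by
          congr 1
          have k1 : b * c * a * (a' * a') = b * c * a' := by
            rw [show b * c * a * (a' * a') = b * c * ((a * a') * a') by noncomm_ring, ha]
            noncomm_ring
          have k2 : a ^ 4 * (a' * a') = a ^ 2 := by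
            have s1 : a ^ 4 * (a' * a') = a ^ 3 * (a * a') * a' := by noncomm_ring
            rw [s1, ha, mul_one]
            have s2 : a ^ 3 * a' = a ^ 2 * (a * a') := by noncomm_ring
            rw [s2, ha, mul_one]
          rw [add_mul, k1, k2]
  -- L8 : b*c*q = a'*q + a' + a^3
  have L8 : b * c * q = a' * q + (a' + a ^ 3) := by
    have t1 : b * c * q = p' * (b * c * (1 + a ^ 4)) := by
      rw [mul_assoc b c q, hcq, ← mul_assoc, hbp']; noncomm_ring
    have t2 : a' * q = p' * ((1 + a ^ 4) * a') := by
      rw [← L2, hcq]; noncomm_ring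
    have t3 : p * (a' + a ^ 3) = b * c * (1 + a ^ 4) - (1 + a ^ 4) * a' := by
      have hp1 : p = b * c * a - 1 := by rw [h7]; noncomm_ring
      rw [hp1]
      have k1 : (b * c * a - 1) * (a' + a ^ 3)
          = b * c * (a * a') + b * c * (a * a ^ 3) - a' - a ^ 3 := by noncomm_ring
      have k2 : (1 + a ^ 4) * a' = a' + a ^ 3 * (a * a') := by noncomm_ring
      rw [k1, k2, ha]
      noncomm_ring
    rw [t1, show a' * q + (a' + a ^ 3) = a' * q + (p' * p) * (a' + a ^ 3) by rw [hp']; noncomm_ring,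
        t2, mul_assoc p' p, t3]
    noncomm_ring
  -- L9 : (b*c)*(b*c)*q + a^2*q = p*a^2 + p*(c*u)^2
  have L9 : b * c * (b * c * q) + a ^ 2 * q = p * a ^ 2 + p * (c * u) ^ 2 := by
    rw [L8, L5, show p * a ^ 2 = (b * c * a - 1) * a ^ 2 by rw [show b * c * a - 1 = p by rw [h7]; noncomm_ring]]
    have k3 : b * c * a * a ^ 2 = b * c * a ^ 3 := by noncomm_ring
    noncomm_ring
  -- assemble
  have main : p * (((c * u) ^ 2 + a ^ 2) * q') * q = p * (((c * a) ^ 2 + b ^ 2) * p') * q := by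
    have lhs : p * (((c * u) ^ 2 + a ^ 2) * q') * q = p * (c * u) ^ 2 + p * a ^ 2 := by
      calc p * (((c * u) ^ 2 + a ^ 2) * q') * q
          = p * (c * u) ^ 2 * (q' * q) + p * a ^ 2 * (q' * q) := by noncomm_ring
        _ = p * (c * u) ^ 2 + p * a ^ 2 := by rw [hq']; noncomm_ring
    have hpb2 : p * b ^ 2 = b * c * (b * c * p) := by
      calc p * b ^ 2 = (p * b) * b := by noncomm_ring
      _ = (b * c * p) * b := by rw [h2]
      _ = b * c * (p * b) := by noncomm_ring
      _ = b * c * (b * c * p) := by rw [h2]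
    have rhs : p * (((c * a) ^ 2 + b ^ 2) * p') * q = a ^ 2 * q + b * c * (b * c * q) := by
      calc p * (((c * a) ^ 2 + b ^ 2) * p') * q
          = p * (c * a) ^ 2 * p' * q + (p * b ^ 2) * p' * q := by noncomm_ring
        _ = p * (p' * a ^ 2 * p) * p' * q + (b * c * (b * c * p)) * p' * q := by rw [hca2, hpb2]
        _ = (p * p') * a ^ 2 * (p * p') * q + b * c * (b * c * ((p * p') * q)) := by noncomm_ring
        _ = a ^ 2 * q + b * c * (b * c * q) := by rw [hp]; noncomm_ring
    rw [lhs, rhs, add_comm (p * (c * u) ^ 2) (p * a ^ 2), ← L9]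
    noncomm_ring
  -- cancel p on the left and q on the right
  have := congrArg (fun x => p' * x * q') main
  calc ((c * u) ^ 2 + a ^ 2) * q'
      = (p' * p) * (((c * u) ^ 2 + a ^ 2) * q') * (q * q') := by rw [hp', hq]; noncomm_ring
    _ = p' * (p * (((c * u) ^ 2 + a ^ 2) * q') * q) * q' := by noncomm_ring
    _ = p' * (p * (((c * a) ^ 2 + b ^ 2) * p') * q) * q' := by rw [main]
    _ = (p' * p) * (((c * a) ^ 2 + b ^ 2) * p') * (q * q') := by noncomm_ring
    _ = ((c * a) ^ 2 + b ^ 2) * p' := by rw [hp', hq]; noncomm_ring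

/-- A solution of the non-commutative `(1,4)`-system with commutator `C`. -/
def IsOneFourSolution {D : Type*} [DivisionRing D] (R : ℤ → Dˣ) (C : Dˣ) : Prop :=
  (∀ n : ℤ, (C : D) =
      (((R (n + 1))⁻¹ : Dˣ) : D) * (R n : D) * (R (n + 1) : D) * (((R n)⁻¹ : Dˣ) : D)) ∧
  (∀ n : ℤ, (R (2 * n) : D) * (C : D) * (R (2 * n - 2) : D) = 1 + (R (2 * n - 1) : D)) ∧
  (∀ n : ℤ, (R (2 * n + 1) : D) * (C : D) * (R (2 * n - 1) : D) = 1 + (R (2 * n) : D) ^ 4)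

/-- For the `(1,4)`-system, with `u_n := R_{2n}`, the quantity
`K_n = ((C u_n)² + u_{n+1}²) (u_{n+1} C u_n − 1)⁻¹` is a conserved quantity. -/
theorem onefour_K_conserved {D : Type*} [DivisionRing D] (R : ℤ → Dˣ) (C : Dˣ)
    (h : IsOneFourSolution R C) :
    ∀ n m : ℤ,
      (((C : D) * (R (2 * n) : D)) ^ 2 + (R (2 * (n + 1)) : D) ^ 2) *
          ((R (2 * (n + 1)) : D) * (C : D) * (R (2 * n) : D) - 1)⁻¹ =
      (((C : D) * (R (2 * m) : D)) ^ 2 + (R (2 * (m + 1)) : D) ^ 2) *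
          ((R (2 * (m + 1)) : D) * (C : D) * (R (2 * m) : D) - 1)⁻¹ := by
  have comm : ∀ k : ℤ, (R (k + 1) : D) * (C : D) * (R k : D) = (R k : D) * (R (k + 1) : D) := by
    intro k
    rw [h.1 k]
    simp [← mul_assoc]
  set F : ℤ → D := fun k =>
    (((C : D) * (R (2 * k) : D)) ^ 2 + (R (2 * (k + 1)) : D) ^ 2) *
      ((R (2 * (k + 1)) : D) * (C : D) * (R (2 * k) : D) - 1)⁻¹ with hF
  have step : ∀ k : ℤ, F k = F (k + 1) := by
    intro k
    show (((C : D) * (R (2 * k) : D)) ^ 2 + (R (2 * (k + 1)) : D) ^ 2) *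
          ((R (2 * (k + 1)) : D) * (C : D) * (R (2 * k) : D) - 1)⁻¹ =
        (((C : D) * (R (2 * (k + 1)) : D)) ^ 2 + (R (2 * (k + 1 + 1)) : D) ^ 2) *
          ((R (2 * (k + 1 + 1)) : D) * (C : D) * (R (2 * (k + 1)) : D) - 1)⁻¹
    rw [show (2 * (k + 1 + 1) : ℤ) = 2 * k + 4 by ring,
        show (2 * (k + 1) : ℤ) = 2 * k + 2 by ring]
    -- denominators are units
    have d1 : (R (2 * k + 2) : D) * (C : D) * (R (2 * k) : D) - 1 = (R (2 * k + 1) : D) := by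
      have := h.2.1 (k + 1)
      rw [show (2 * (k + 1) - 2 : ℤ) = 2 * k by ring,
          show (2 * (k + 1) - 1 : ℤ) = 2 * k + 1 by ring,
          show (2 * (k + 1) : ℤ) = 2 * k + 2 by ring] at this
      rw [this, add_sub_cancel_left]
    have d2 : (R (2 * k + 4) : D) * (C : D) * (R (2 * k + 2) : D) - 1 = (R (2 * k + 3) : D) := by
      have := h.2.1 (k + 2)
      rw [show (2 * (k + 2) - 2 : ℤ) = 2 * k + 2 by ring,
          show (2 * (k + 2) - 1 : ℤ) = 2 * k + 3 by ring,
          show (2 * (k + 2) : ℤ) = 2 * k + 4 by ring] at this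
      rw [this, add_sub_cancel_left]
    rw [d1, d2, ← Units.val_inv_eq_inv_val, ← Units.val_inv_eq_inv_val]
    -- instantiate the relations
    have c1 : (R (2 * k + 3) : D) * C * (R (2 * k + 2) : D)
        = (R (2 * k + 2) : D) * (R (2 * k + 3) : D) := by
      have := comm (2 * k + 2); rwa [show (2 * k + 2 + 1 : ℤ) = 2 * k + 3 by ring] at this
    have c2 : (R (2 * k + 4) : D) * C * (R (2 * k + 3) : D)
        = (R (2 * k + 3) : D) * (R (2 * k + 4) : D) := by
      have := comm (2 * k + 3); rwa [show (2 * k + 3 + 1 : ℤ) = 2 * k + 4 by ring] at this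
    have c4 : (R (2 * k + 2) : D) * C * (R (2 * k + 1) : D)
        = (R (2 * k + 1) : D) * (R (2 * k + 2) : D) := by
      have := comm (2 * k + 1); rwa [show (2 * k + 1 + 1 : ℤ) = 2 * k + 2 by ring] at this
    have c5 : (R (2 * k + 1) : D) * C * (R (2 * k) : D)
        = (R (2 * k) : D) * (R (2 * k + 1) : D) := by
      have := comm (2 * k); rwa [show (2 * k + 1 : ℤ) = 2 * k + 1 by ring] at this
    have c3 : (R (2 * k + 3) : D) * C * (R (2 * k + 1) : D) = 1 + (R (2 * k + 2) : D) ^ 4 := by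
      have := h.2.2 (k + 1)
      rwa [show (2 * (k + 1) + 1 : ℤ) = 2 * k + 3 by ring,
          show (2 * (k + 1) - 1 : ℤ) = 2 * k + 1 by ring,
          show (2 * (k + 1) : ℤ) = 2 * k + 2 by ring] at this
    have c6 : (R (2 * k + 2) : D) * C * (R (2 * k) : D) = 1 + (R (2 * k + 1) : D) := by
      have := h.2.1 (k + 1)
      rwa [show (2 * (k + 1) - 2 : ℤ) = 2 * k by ring,
          show (2 * (k + 1) - 1 : ℤ) = 2 * k + 1 by ring,
          show (2 * (k + 1) : ℤ) = 2 * k + 2 by ring] at this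
    have c7 : (R (2 * k + 4) : D) * C * (R (2 * k + 2) : D) = 1 + (R (2 * k + 3) : D) := by
      have := h.2.1 (k + 2)
      rwa [show (2 * (k + 2) - 2 : ℤ) = 2 * k + 2 by ring,
          show (2 * (k + 2) - 1 : ℤ) = 2 * k + 3 by ring,
          show (2 * (k + 2) : ℤ) = 2 * k + 4 by ring] at this
    exact key_onefour (R (2 * k + 2) : D) (R (2 * k + 4) : D) (C : D) (R (2 * k) : D)
      (R (2 * k + 3) : D) (R (2 * k + 1) : D)
      ((R (2 * k + 2))⁻¹ : Dˣ) ((R (2 * k + 3))⁻¹ : Dˣ) ((R (2 * k + 1))⁻¹ : Dˣ)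
      (Units.mul_inv _) (Units.inv_mul _) (Units.mul_inv _) (Units.inv_mul _)
      (Units.mul_inv _) (Units.inv_mul _) c1 c2 c3 c4 c5 c6 c7
  have tozero : ∀ k : ℤ, F k = F 0 := by
    intro k
    induction k using Int.induction_on with
    | zero => rfl
    | succ i ih => rw [← step i]; exact ih
    | pred i ih =>
        have := step (-(i : ℤ) - 1)
        rw [show (-(i : ℤ) - 1 + 1 : ℤ) = -i by ring] at this
        rw [this]; exact ih
  intro n m
  exact (tozero n).trans (tozero m).symm
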